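/- Let $E_{max}>0$, let $S\colon[0,E_{max}]\to\mathbb{R}$ be continuous and strictly positive, let $t(E)=\int_E^{E_{max}}1/S(E')\,dE'$ with inverse $E(t)$, and let $\rho\colon\mathbb{R}^3\to\mathbb{R}$ be differentiable and strictly positive. Let $\Sigma_t\colon[0,E_{max}]\to\mathbb{R}$ and $\Sigma_s\colon[0,E_{max}]\times[-1,1]\to\mathbb{R}$ be continuous. Suppose $\psi_c,\psi_u\colon [0,E_{max}]\times\mathbb{R}^3\times\mathbb{S}^2\to\mathbb{R}$ are differentiable in $E$ and $\mathbf{x}$ and integrable in angle, and that $\psi_c$ satisfies $\boldsymbol\Omega\cdot\nabla_x\psi_c + \Sigma_t(E)\rho(\mathbf{x})\psi_c = \partial_E\big(S(E)\rho(\mathbf{x})\psi_c\big) + \int_{\mathbb{S}^2}\Sigma_s(E,\boldsymbol\Omega\cdot\boldsymbol\Omega')\rho(\mathbf{x})\,(\psi_u+\psi_c)(E,\mathbf{x},\boldsymbol\Omega')\,d\boldsymbol\Omega'$. Define $\widetilde\psi_c(t,\mathbf{x},\boldsymbol\Omega) := \rho(\mathbf{x})S(E(t))\psi_c(E(t),\mathbf{x},\boldsymbol\Omega)$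 and $\widetilde\psi_u$ analogously. Then for all $t\in(0,t(0))$: $\partial_t\widetilde\psi_c + \boldsymbol\Omega\cdot\nabla_x\big(\widetilde\psi_c/\rho(\mathbf{x})\big) + \Sigma_t(E(t))\,\widetilde\psi_c = \int_{\mathbb{S}^2}\Sigma_s(E(t),\boldsymbol\Omega\cdot\boldsymbol\Omega')\,\big(\widetilde\psi_u+\widetilde\psi_c\big)(t,\mathbf{x},\boldsymbol\Omega')\,d\boldsymbol\Omega'$. -/

import Mathlib

open MeasureTheory Set

/-- The unit sphere `𝕊²` in `ℝ³`. -/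
abbrev UnitSphere : Set (EuclideanSpace ℝ (Fin 3)) :=
  Metric.sphere (0 : EuclideanSpace ℝ (Fin 3)) 1

/-- The surface measure on the unit sphere `𝕊² ⊆ ℝ³`. -/
noncomputable def sphereMeasure : Measure UnitSphere :=
  (volume : Measure (EuclideanSpace ℝ (Fin 3))).toSphere

/-- Pseudo-time form of the collided equation: if `ψ_c` solves the collided
continuous-slowing-down equation (with water-equivalence scaling by the density
`ρ`), then the transformed flux `ψ̃_c(t,x,Ω) = ρ(x) S(E(t)) ψ_c(E(t),x,Ω)`
solves `∂_t ψ̃_c + Ω·∇ₓ(ψ̃_c/ρ) + Σ_t(E(t)) ψ̃_c = ∫ Σ_s(E(t),Ω·Ω')(ψ̃ᵤ+ψ̃_c) dΩ'`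
for every pseudo-time `t` in the interior of `[0, t(0)]`. -/
theorem pseudo_time_transformed_collided_equation
    (Emax : ℝ) (hEmax : 0 < Emax)
    (S : ℝ → ℝ)
    (hScont : ContinuousOn S (Icc 0 Emax))
    (hSpos : ∀ E ∈ Icc 0 Emax, 0 < S E)
    (t : ℝ → ℝ)
    (ht : ∀ E : ℝ, t E = ∫ E' in E..Emax, 1 / S E')
    (Efun : ℝ → ℝ)
    (hEmaps : Set.MapsTo Efun (Icc 0 (t 0)) (Icc 0 Emax))
    (hEleft : ∀ E ∈ Icc 0 Emax, Efun (t E) = E)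
    (hEright : ∀ s ∈ Icc 0 (t 0), t (Efun s) = s)
    (ρ : EuclideanSpace ℝ (Fin 3) → ℝ)
    (hρdiff : Differentiable ℝ ρ)
    (hρpos : ∀ x, 0 < ρ x)
    (Sigt : ℝ → ℝ) (hSigt : ContinuousOn Sigt (Icc 0 Emax))
    (Sigs : ℝ → ℝ → ℝ)
    (hSigs : ContinuousOn (fun p : ℝ × ℝ => Sigs p.1 p.2) (Icc 0 Emax ×ˢ Icc (-1) 1))
    (ψc ψu : ℝ → EuclideanSpace ℝ (Fin 3) → UnitSphere → ℝ)
    -- differentiability in energy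
    (hψcE : ∀ E ∈ Icc 0 Emax, ∀ (x : EuclideanSpace ℝ (Fin 3)) (Ω : UnitSphere),
      DifferentiableAt ℝ (fun e => ψc e x Ω) E)
    (hψuE : ∀ E ∈ Icc 0 Emax, ∀ (x : EuclideanSpace ℝ (Fin 3)) (Ω : UnitSphere),
      DifferentiableAt ℝ (fun e => ψu e x Ω) E)
    (hSψcE : ∀ E ∈ Icc 0 Emax, ∀ (x : EuclideanSpace ℝ (Fin 3)) (Ω : UnitSphere),
      DifferentiableAt ℝ (fun e => S e * ψc e x Ω) E)
    -- differentiability in space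
    (hψcx : ∀ E ∈ Icc 0 Emax, ∀ (x : EuclideanSpace ℝ (Fin 3)) (Ω : UnitSphere),
      DifferentiableAt ℝ (fun y => ψc E y Ω) x)
    (hψux : ∀ E ∈ Icc 0 Emax, ∀ (x : EuclideanSpace ℝ (Fin 3)) (Ω : UnitSphere),
      DifferentiableAt ℝ (fun y => ψu E y Ω) x)
    -- integrability in angle
    (hIu : ∀ E ∈ Icc 0 Emax, ∀ (x : EuclideanSpace ℝ (Fin 3)) (Ω : UnitSphere),
      Integrable (fun Ω' : UnitSphere =>
        Sigs E (inner ℝ (Ω : EuclideanSpace ℝ (Fin 3)) (Ω' : EuclideanSpace ℝ (Fin 3)) : ℝ) *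
          ψu E x Ω') sphereMeasure)
    (hIc : ∀ E ∈ Icc 0 Emax, ∀ (x : EuclideanSpace ℝ (Fin 3)) (Ω : UnitSphere),
      Integrable (fun Ω' : UnitSphere =>
        Sigs E (inner ℝ (Ω : EuclideanSpace ℝ (Fin 3)) (Ω' : EuclideanSpace ℝ (Fin 3)) : ℝ) *
          ψc E x Ω') sphereMeasure)
    -- the collided equation in energy form
    (hcollided : ∀ E ∈ Icc 0 Emax, ∀ (x : EuclideanSpace ℝ (Fin 3)) (Ω : UnitSphere),
      fderiv ℝ (fun y => ψc E y Ω) x (Ω : EuclideanSpace ℝ (Fin 3)) +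
          Sigt E * ρ x * ψc E x Ω =
        deriv (fun e => S e * ρ x * ψc e x Ω) E +
          ∫ Ω' : UnitSphere,
            Sigs E (inner ℝ (Ω : EuclideanSpace ℝ (Fin 3)) (Ω' : EuclideanSpace ℝ (Fin 3)) : ℝ) *
              ρ x * (ψu E x Ω' + ψc E x Ω') ∂sphereMeasure)
    -- the transformed fluxes
    (ψtc ψtu : ℝ → EuclideanSpace ℝ (Fin 3) → UnitSphere → ℝ)
    (hψtc : ∀ (s : ℝ) (x : EuclideanSpace ℝ (Fin 3)) (Ω : UnitSphere),
      ψtc s x Ω = ρ x * S (Efun s) * ψc (Efun s) x Ω)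
    (hψtu : ∀ (s : ℝ) (x : EuclideanSpace ℝ (Fin 3)) (Ω : UnitSphere),
      ψtu s x Ω = ρ x * S (Efun s) * ψu (Efun s) x Ω) :
    -- then the transformed collided equation holds in pseudo-time
    ∀ s ∈ Ioo 0 (t 0), ∀ (x : EuclideanSpace ℝ (Fin 3)) (Ω : UnitSphere),
      deriv (fun τ => ψtc τ x Ω) s +
          fderiv ℝ (fun y => ψtc s y Ω / ρ y) x (Ω : EuclideanSpace ℝ (Fin 3)) +
          Sigt (Efun s) * ψtc s x Ω =
        ∫ Ω' : UnitSphere,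
          Sigs (Efun s) (inner ℝ (Ω : EuclideanSpace ℝ (Fin 3)) (Ω' : EuclideanSpace ℝ (Fin 3)) : ℝ) *
            (ψtu s x Ω' + ψtc s x Ω') ∂sphereMeasure := by
  intro s hs x Ω
  have hEmaxIcc : Emax ∈ Icc (0:ℝ) Emax := ⟨hEmax.le, le_rfl⟩
  set f : ℝ → ℝ := fun E' => 1 / S E' with hfdef
  have hfcont : ContinuousOn f (Icc 0 Emax) :=
    continuousOn_const.div hScont fun E hE => (hSpos E hE).ne'
  have hfint : ∀ a ∈ Icc (0:ℝ) Emax, ∀ b ∈ Icc (0:ℝ) Emax,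
      IntervalIntegrable f volume a b := fun a ha b hb =>
    (hfcont.mono (uIcc_subset_Icc ha hb)).intervalIntegrable
  -- t is strictly antitone on [0, Emax]
  have htanti : StrictAntiOn t (Icc 0 Emax) := by
    intro a ha b hb hab
    have hpos : (0:ℝ) < ∫ x in a..b, f x := by
      refine intervalIntegral.intervalIntegral_pos_of_pos_on (hfint a ha b hb) ?_ hab
      intro x hx
      exact one_div_pos.mpr (hSpos x ⟨le_trans ha.1 hx.1.le, le_trans hx.2.le hb.2⟩)
    have hadd : (∫ x in a..b, f x) + ∫ x in b..Emax, f x = ∫ x in a..Emax, f x :=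
      intervalIntegral.integral_add_adjacent_intervals (hfint a ha b hb)
        (hfint b hb Emax hEmaxIcc)
    have h1 : t a = ∫ x in a..Emax, f x := ht a
    have h2 : t b = ∫ x in b..Emax, f x := ht b
    linarith [h1, h2, hadd, hpos]
  have htEmax : t Emax = 0 := by
    rw [ht Emax]; simp
  have hsIcc : s ∈ Icc 0 (t 0) := ⟨hs.1.le, hs.2.le⟩
  have hEIcc : Efun s ∈ Icc 0 Emax := hEmaps hsIcc
  -- Efun s is interior
  have hts : t (Efun s) = s := hEright s hsIcc
  have hEne0 : Efun s ≠ 0 := by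
    intro h
    rw [h] at hts
    exact (ne_of_lt hs.2) hts.symm
  have hEneMax : Efun s ≠ Emax := by
    intro h
    rw [h, htEmax] at hts
    exact (ne_of_lt hs.1) hts
  have hEIoo : Efun s ∈ Ioo 0 Emax :=
    ⟨lt_of_le_of_ne hEIcc.1 (Ne.symm hEne0), lt_of_le_of_ne hEIcc.2 hEneMax⟩
  -- derivative of t at Efun s
  have hcontAt : ContinuousAt f (Efun s) :=
    hfcont.continuousAt (Icc_mem_nhds hEIoo.1 hEIoo.2)
  have hprim : HasDerivAt (fun u => ∫ x in Emax..u, f x) (f (Efun s)) (Efun s) :=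
    intervalIntegral.integral_hasDerivAt_right (hfint Emax hEmaxIcc (Efun s) hEIcc)
      ((hfcont.mono Ioo_subset_Icc_self).stronglyMeasurableAtFilter isOpen_Ioo (Efun s) hEIoo)
      hcontAt
  have htd : HasDerivAt t (-(f (Efun s))) (Efun s) := by
    refine HasDerivAt.congr_of_eventuallyEq hprim.neg
      (Filter.Eventually.of_forall fun u => ?_)
    rw [ht u, intervalIntegral.integral_symm]
    rfl
  -- continuity of Efun at s
  have hEanti : AntitoneOn Efun (Icc 0 (t 0)) := by
    intro a ha b hb hab
    by_contra h
    push_neg at h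
    have := htanti (hEmaps ha) (hEmaps hb) h
    rw [hEright a ha, hEright b hb] at this
    exact absurd this (not_lt.mpr hab)
  have hsurj : SurjOn Efun (Icc 0 (t 0)) (Icc 0 Emax) := by
    intro E' hE'
    have h0 : t E' ∈ Icc 0 (t 0) := by
      constructor
      · rw [← htEmax]
        exact htanti.antitoneOn hE' hEmaxIcc hE'.2
      · exact htanti.antitoneOn ⟨le_rfl, hEmax.le⟩ hE' hE'.1
    exact ⟨t E', h0, hEleft E' hE'⟩
  have hgmono : MonotoneOn (fun y => -(Efun y)) (Icc 0 (t 0)) :=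
    fun a ha b hb hab => neg_le_neg (hEanti ha hb hab)
  have himg : (fun y => -(Efun y)) '' Icc 0 (t 0) ∈ nhds (-(Efun s)) := by
    refine Filter.mem_of_superset (Ioo_mem_nhds (by simpa using hEIoo.2)
      (by simpa using hEIoo.1) : Ioo (-Emax) 0 ∈ nhds (-(Efun s))) ?_
    intro y hy
    obtain ⟨c, hc, hEc⟩ := hsurj (⟨by linarith [hy.2], by linarith [hy.1]⟩ :
      -y ∈ Icc 0 Emax)
    exact ⟨c, hc, by simp [hEc]⟩
  have hgcont : ContinuousAt (fun y => -(Efun y)) s :=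
    continuousAt_of_monotoneOn_of_image_mem_nhds hgmono (Icc_mem_nhds hs.1 hs.2) himg
  have hEcont : ContinuousAt Efun s := by
    have := hgcont.neg
    exact this.congr (Filter.Eventually.of_forall fun y => by simp)
  -- derivative of Efun at s
  have hSE : 0 < S (Efun s) := hSpos _ hEIcc
  have hEfun : HasDerivAt Efun (-(S (Efun s))) s := by
    have hfpos : 0 < f (Efun s) := by
      simp only [hfdef]
      positivity
    have h := HasDerivAt.of_local_left_inverse hEcont htd
      (neg_ne_zero.mpr hfpos.ne')
      (Filter.Eventually.mono (Ioo_mem_nhds hs.1 hs.2) fun y hy =>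
        hEright y ⟨hy.1.le, hy.2.le⟩)
    convert h using 1
    show -(S (Efun s)) = (-(1 / S (Efun s)))⁻¹
    rw [one_div, ← neg_inv, inv_inv]
    rfl
  -- compute the pseudo-time derivative
  have hg₁ : DifferentiableAt ℝ (fun e => S e * ψc e x Ω) (Efun s) := hSψcE _ hEIcc x Ω
  have hcomp : HasDerivAt (fun τ => S (Efun τ) * ψc (Efun τ) x Ω)
      (deriv (fun e => S e * ψc e x Ω) (Efun s) * (-(S (Efun s)))) s :=
    HasDerivAt.comp s hg₁.hasDerivAt hEfun
  have hderivt : deriv (fun τ => ψtc τ x Ω) s =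
      ρ x * (deriv (fun e => S e * ψc e x Ω) (Efun s) * (-(S (Efun s)))) := by
    have heq : (fun τ => ψtc τ x Ω) = fun τ => ρ x * (S (Efun τ) * ψc (Efun τ) x Ω) :=
      funext fun τ => by rw [hψtc]; ring
    rw [heq]
    exact (hcomp.const_mul (ρ x)).deriv
  -- compute the spatial derivative
  have hfd : fderiv ℝ (fun y => ψtc s y Ω / ρ y) x (Ω : EuclideanSpace ℝ (Fin 3)) =
      S (Efun s) * fderiv ℝ (fun y => ψc (Efun s) y Ω) x (Ω : EuclideanSpace ℝ (Fin 3)) := by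
    have heq : (fun y => ψtc s y Ω / ρ y) = fun y => S (Efun s) * ψc (Efun s) y Ω :=
      funext fun y => by
        rw [hψtc]
        field_simp [(hρpos y).ne']
    rw [heq, fderiv_const_mul (hψcx _ hEIcc x Ω)]
    simp
  -- rewrite the integral
  have hint : (∫ Ω' : UnitSphere,
        Sigs (Efun s) (inner ℝ (Ω : EuclideanSpace ℝ (Fin 3)) (Ω' : EuclideanSpace ℝ (Fin 3)) : ℝ) *
          (ψtu s x Ω' + ψtc s x Ω') ∂sphereMeasure) =
      S (Efun s) * ∫ Ω' : UnitSphere,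
        Sigs (Efun s) (inner ℝ (Ω : EuclideanSpace ℝ (Fin 3)) (Ω' : EuclideanSpace ℝ (Fin 3)) : ℝ) *
          ρ x * (ψu (Efun s) x Ω' + ψc (Efun s) x Ω') ∂sphereMeasure := by
    rw [← integral_const_mul]
    congr 1
    funext Ω'
    rw [hψtu, hψtc]
    ring
  -- rewrite the energy derivative in the collided equation
  have hg2 : deriv (fun e => S e * ρ x * ψc e x Ω) (Efun s) =
      ρ x * deriv (fun e => S e * ψc e x Ω) (Efun s) := by
    have heq : (fun e => S e * ρ x * ψc e x Ω) = fun e => ρ x * (S e * ψc e x Ω) :=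
      funext fun e => by ring
    rw [heq, deriv_const_mul _ hg₁]
  have hc := hcollided (Efun s) hEIcc x Ω
  rw [hg2] at hc
  rw [hderivt, hfd, hint, hψtc]
  linear_combination S (Efun s) * hc
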